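/- In the d-dimensional lattice graph, fix d ≤ t ≤ dn and a node p ∈ L_t, and let M_p = N(p) ∩ (J_{t−1}^S ∪ L_{t−1}^S). On the reduced subgraph G''^{(t)}_p obtained from the corner subgraph by deleting p and all edges from p into M_p (promoting M_p to boundary), any function u supported on L_t^S \ {p} satisfying Δ_γ u = 0 on L_{t−1}^S \ M_p, u = 0 on J_{t−1}^S, and D_γ u = 0 on J_{t−1}^S must vanish identically. -/
import Mathlib


noncomputable section
open Classical Finset

namespace DiscreteCalderon

/-- Vertices of the ambient lattice `ℤ^d`. -/
abbrev V (d : ℕ) := Fin d → ℤ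

/-- Interior vertex set `D = {x : 1 ≤ x_i ≤ n}`. -/
def Dset (d n : ℕ) : Set (V d) := {x | ∀ i, 1 ≤ x i ∧ x i ≤ (n : ℤ)}

/-- ℓ¹ distance. -/
def dist1 {d : ℕ} (p q : V d) : ℤ := ∑ i, |p i - q i|

/-- Boundary vertex set `∂D`: vertices at ℓ¹ distance 1 from `D`. -/
def Bset (d n : ℕ) : Set (V d) := {p | p ∉ Dset d n ∧ ∃ q ∈ Dset d n, dist1 p q = 1}

/-- All vertices of the graph, `D ∪ ∂D`. -/
def Vset (d n : ℕ) : Set (V d) := Dset d n ∪ Bset d n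

/-- Adjacency of the lattice graph: ℓ¹ distance 1, both endpoints vertices,
not both on the boundary. -/
def Adj (d n : ℕ) (p q : V d) : Prop :=
  dist1 p q = 1 ∧ p ∈ Vset d n ∧ q ∈ Vset d n ∧ (p ∈ Dset d n ∨ q ∈ Dset d n)

/-- A finite box containing all vertices. -/
def box (d n : ℕ) : Finset (V d) :=
  Fintype.piFinset (fun _ : Fin d => Finset.Icc (0 : ℤ) ((n : ℤ) + 1))

/-- Neighbours of `p` in the graph, as a finite set. -/
def nbr (d n : ℕ) (p : V d) : Finset (V d) := (box d n).filter (fun q => Adj d n p q)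

/-- Interior neighbours of `p`. -/
def nbrD (d n : ℕ) (p : V d) : Finset (V d) := (nbr d n p).filter (fun q => q ∈ Dset d n)

/-- The discrete (weighted) Laplacian `(Δ_γ u)_p = ∑_{q∈N(p)} γ_{qp}(u_q - u_p)`. -/
def lap (d n : ℕ) (γ : V d → V d → ℝ) (u : V d → ℝ) (p : V d) : ℝ :=
  ∑ q ∈ nbr d n p, γ q p * (u q - u p)

/-- The boundary current `(D_γ u)_p = ∑_{q∈N(p)∩D} γ_{pq}(u_q - u_p)`
(there is exactly one interior neighbour of a boundary node). -/
def cur (d n : ℕ) (γ : V d → V d → ℝ) (u : V d → ℝ) (p : V d) : ℝ :=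
  ∑ q ∈ nbrD d n p, γ p q * (u q - u p)

/-- A strictly positive symmetric conductivity. -/
def GoodCond (d n : ℕ) (γ : V d → V d → ℝ) : Prop :=
  (∀ p q, γ p q = γ q p) ∧ ∀ p q, Adj d n p q → 0 < γ p q

/-- The coordinate sum of a lattice point. -/
def sum1 {d : ℕ} (x : V d) : ℤ := ∑ i, x i

/-- Interior diagonal slice `L_t`. -/
def L (d n : ℕ) (t : ℤ) : Set (V d) := {x | x ∈ Dset d n ∧ sum1 x = t}

/-- `L_t^S = ∪_{ℓ ≤ t} L_ℓ`. -/
def LS (d n : ℕ) (t : ℤ) : Set (V d) := {x | x ∈ Dset d n ∧ sum1 x ≤ t}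

/-- Boundary diagonal slice `K_t`. -/
def K (d n : ℕ) (t : ℤ) : Set (V d) := {x | x ∈ Bset d n ∧ sum1 x = t}

/-- `K_t^- = {x ∈ K_t : min_i x_i = 0}`. -/
def Km (d n : ℕ) (t : ℤ) : Set (V d) := {x | x ∈ K d n t ∧ ∃ i, x i = 0}

/-- `K_t^+ = {x ∈ K_t : max_i x_i = n+1}`. -/
def Kp (d n : ℕ) (t : ℤ) : Set (V d) := {x | x ∈ K d n t ∧ ∃ i, x i = (n : ℤ) + 1}

/-- `K_t^{S-} = ∪_{ℓ ≤ t} K_ℓ^-`. -/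
def KSm (d n : ℕ) (t : ℤ) : Set (V d) := {x | x ∈ Bset d n ∧ sum1 x ≤ t ∧ ∃ i, x i = 0}

/-- `K_t^{S+} = ∪_{ℓ ≤ t} K_ℓ^+`. -/
def KSp (d n : ℕ) (t : ℤ) : Set (V d) := {x | x ∈ Bset d n ∧ sum1 x ≤ t ∧ ∃ i, x i = (n : ℤ) + 1}

/-- The lower boundary region `J_t^S = K_t^{S-} ∪ K_{t+1}^{S+}`. -/
def JS (d n : ℕ) (t : ℤ) : Set (V d) := KSm d n t ∪ KSp d n (t + 1)

/-- `J_t = K_t^- ∪ K_{t+1}^+`. -/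
def Jslice (d n : ℕ) (t : ℤ) : Set (V d) := Km d n t ∪ Kp d n (t + 1)

/-- `u` is the γ-harmonic extension of boundary data `φ` (zero-extension convention
outside `D ∪ ∂D`). -/
def IsSol (d n : ℕ) (γ : V d → V d → ℝ) (φ u : V d → ℝ) : Prop :=
  (∀ p, p ∉ Vset d n → u p = 0) ∧
  (∀ p ∈ Dset d n, lap d n γ u p = 0) ∧
  (∀ p ∈ Bset d n, u p = φ p)

/-- The Laplacian row vector `v_p`. -/
def vrow (d n : ℕ) (γ : V d → V d → ℝ) (p : V d) : V d → ℝ := fun q =>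
  if Adj d n p q then γ p q
  else if q = p then -(∑ r ∈ nbr d n p, γ p r) else 0

/-- Restriction of a function to a set (zero outside). -/
def rst {d : ℕ} (S : Set (V d)) (f : V d → ℝ) : V d → ℝ := fun q => if q ∈ S then f q else 0

/-- Euclidean inner product of (vertex-supported) functions. -/
def dot (d n : ℕ) (f g : V d → ℝ) : ℝ := ∑ p ∈ box d n, f p * g p

/-- The localized solution space `𝒰^{(t)}`: restrictions to `L_t^S ∪ J_t^S` of
harmonic extensions of boundary potentials in `ker T₁^{(t)}`. -/
def Uset (d n : ℕ) (γ : V d → V d → ℝ) (t : ℤ) : Set (V d → ℝ) :=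
  {u | (∀ p, p ∉ LS d n t ∪ JS d n t → u p = 0) ∧
    ∃ φ w : V d → ℝ, (∀ p, p ∉ JS d n t → φ p = 0) ∧ IsSol d n γ φ w ∧
      (∀ p ∈ L d n (t + 1), w p = 0) ∧ ∀ p ∈ LS d n t ∪ JS d n t, u p = w p}

/-- The set `E_t` of edges between the consecutive layers:
`E(K_t^-, L_{t+1}) ∪ E(L_t, K_{t+1}^+) ∪ E(L_t, L_{t+1})`. -/
def EdgeT (d n : ℕ) (t : ℤ) (p q : V d) : Prop :=
  Adj d n p q ∧
    ((p ∈ Km d n t ∧ q ∈ L d n (t + 1)) ∨ (q ∈ Km d n t ∧ p ∈ L d n (t + 1)) ∨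
     (p ∈ L d n t ∧ q ∈ Kp d n (t + 1)) ∨ (q ∈ L d n t ∧ p ∈ Kp d n (t + 1)) ∨
     (p ∈ L d n t ∧ q ∈ L d n (t + 1)) ∨ (q ∈ L d n t ∧ p ∈ L d n (t + 1)))

/-- The edge vector `J_p^u ∈ ℝ^{E_t}`, `J_p^u(pq) = u_p - u_q` on edges of `E_t`
incident to `p`, and `0` otherwise (as a symmetric function of edge endpoints). -/
def Jvec (d n : ℕ) (t : ℤ) (u : V d → ℝ) (p : V d) : V d → V d → ℝ := fun a b =>
  if EdgeT d n t a b then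
    (if a = p then u a - u b else if b = p then u b - u a else 0)
  else 0

/-- Inner product of edge functions. -/
def dotE (d n : ℕ) (f g : V d → V d → ℝ) : ℝ :=
  ∑ p ∈ box d n, ∑ q ∈ box d n, f p q * g p q


section Stmt8Aux

variable {d n : ℕ}

/-- coordinate bump vector -/
private def sing (k : Fin d) (c : ℤ) : V d := fun i => if i = k then c else 0

private lemma addsing_apply (x : V d) (k : Fin d) (c : ℤ) (i : Fin d) :
    (x + sing k c) i = x i + if i = k then c else 0 := rfl

private lemma mem_box_iff' {x : V d} : x ∈ box d n ↔ ∀ i, 0 ≤ x i ∧ x i ≤ (n:ℤ)+1 := by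
  simp [box, Fintype.mem_piFinset, Finset.mem_Icc]

private lemma Dset_mem_box {x : V d} (hx : x ∈ Dset d n) : x ∈ box d n := by
  rw [mem_box_iff']
  intro i
  have := hx i
  omega

private lemma dist1_comm' (p q : V d) : dist1 p q = dist1 q p :=
  Finset.sum_congr rfl (fun i _ => abs_sub_comm _ _)

private lemma sum1_add_single (x : V d) (k : Fin d) (c : ℤ) :
    sum1 (x + sing k c) = sum1 x + c := by
  unfold sum1
  simp only [addsing_apply]
  rw [Finset.sum_add_distrib, Finset.sum_ite_eq' Finset.univ k (fun _ => c),
    if_pos (Finset.mem_univ k)]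

private lemma dist1_add_single (x : V d) (k : Fin d) (c : ℤ) :
    dist1 x (x + sing k c) = |c| := by
  unfold dist1
  have h : ∀ i ∈ Finset.univ, |x i - (x + sing k c) i| = if i = k then |c| else 0 := by
    intro i _
    rw [addsing_apply]
    by_cases hik : i = k
    · simp [hik, abs_neg]
    · simp [hik]
  rw [Finset.sum_congr rfl h, Finset.sum_ite_eq' Finset.univ k (fun _ => |c|),
    if_pos (Finset.mem_univ k)]

private lemma add_single_neg_cancel (x : V d) (j : Fin d) :
    x + sing j (-1) + sing j 1 = x := by
  funext i
  show x i + _ + _ = x i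
  unfold sing
  split_ifs <;> ring

private lemma dist1_one_cases {p q : V d} (h : dist1 p q = 1) :
    ∃ (k : Fin d) (c : ℤ), (c = 1 ∨ c = -1) ∧ q = p + sing k c := by
  have hne : ∃ k ∈ Finset.univ, |p k - q k| ≠ 0 := by
    by_contra hc
    push_neg at hc
    have h0 : dist1 p q = 0 := Finset.sum_eq_zero (fun i hi => hc i hi)
    omega
  obtain ⟨k, -, hk⟩ := hne
  have hk' : p k - q k ≠ 0 := abs_ne_zero.mp hk
  have h1 : 1 ≤ |p k - q k| := Int.one_le_abs hk'
  have hsum : |p k - q k| + ∑ i ∈ Finset.univ.erase k, |p i - q i| = 1 := by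
    have := Finset.add_sum_erase Finset.univ (fun i => |p i - q i|) (Finset.mem_univ k)
    simpa using this.trans h
  have hrestnn : 0 ≤ ∑ i ∈ Finset.univ.erase k, |p i - q i| :=
    Finset.sum_nonneg (fun i _ => abs_nonneg _)
  have hrest : ∑ i ∈ Finset.univ.erase k, |p i - q i| = 0 := by omega
  have habs : |p k - q k| = 1 := by omega
  have hzero : ∀ i ∈ Finset.univ.erase k, |p i - q i| = 0 :=
    (Finset.sum_eq_zero_iff_of_nonneg (fun i _ => abs_nonneg _)).mp hrest
  have hcase : p k - q k = 1 ∨ p k - q k = -1 := (abs_eq (by norm_num)).mp habs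
  refine ⟨k, q k - p k, by omega, ?_⟩
  funext i
  rw [addsing_apply]
  by_cases hik : i = k
  · subst hik; simp
  · have h2 := hzero i (by simp [hik])
    have h3 : p i = q i := by
      have := abs_eq_zero.mp h2
      omega
    simp [hik, h3]

private lemma mem_nbr_cases {y q : V d} (h : q ∈ nbr d n y) :
    ∃ (k : Fin d) (c : ℤ), (c = 1 ∨ c = -1) ∧ q = y + sing k c :=
  dist1_one_cases (Finset.mem_filter.mp h).2.1

private lemma mem_nbr_of {y q : V d} (hbox : q ∈ box d n) (hadj : Adj d n y q) :
    q ∈ nbr d n y := Finset.mem_filter.mpr ⟨hbox, hadj⟩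

private lemma key_step {γ : V d → V d → ℝ} (hγ : GoodCond d n γ) {u : V d → ℝ} {y x : V d}
    (hxy : x ∈ nbr d n y) (hlap : lap d n γ u y = 0) (huy : u y = 0)
    (hothers : ∀ q ∈ nbr d n y, q ≠ x → u q = 0) : u x = 0 := by
  have hadj : Adj d n y x := (Finset.mem_filter.mp hxy).2
  have hpos : 0 < γ x y := by rw [hγ.1]; exact hγ.2 y x hadj
  have hsum : lap d n γ u y = γ x y * (u x - u y) := by
    unfold lap
    exact Finset.sum_eq_single_of_mem x hxy
      (fun q hq hne => by rw [hothers q hq hne, huy]; ring)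
  rw [hlap, huy, sub_zero] at hsum
  rcases mul_eq_zero.mp hsum.symm with h | h
  · exact absurd h (ne_of_gt hpos)
  · exact h

/-- base-(n+2) "lex value" of a lattice point -/
private def lvv (d n : ℕ) (x : V d) : ℤ :=
  ∑ i : Fin d, x i * ((n:ℤ)+2) ^ (d - 1 - (i:ℕ))

private lemma lvv_add_single (x : V d) (k : Fin d) (c : ℤ) :
    lvv d n (x + sing k c) = lvv d n x + c * ((n:ℤ)+2) ^ (d - 1 - (k:ℕ)) := by
  unfold lvv
  simp only [addsing_apply, add_mul, ite_mul, zero_mul]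
  rw [Finset.sum_add_distrib,
    Finset.sum_ite_eq' Finset.univ k (fun i => c * ((n:ℤ)+2) ^ (d - 1 - (i:ℕ))),
    if_pos (Finset.mem_univ k)]

private lemma w_lt {i k : Fin d} (h : (i:ℕ) < (k:ℕ)) :
    ((n:ℤ)+2) ^ (d - 1 - (k:ℕ)) < ((n:ℤ)+2) ^ (d - 1 - (i:ℕ)) := by
  apply pow_lt_pow_right₀ (by omega)
  have := k.isLt
  omega

private lemma lvv_nonneg {x : V d} (hx : x ∈ Dset d n) : 0 ≤ lvv d n x :=
  Finset.sum_nonneg (fun i _ => mul_nonneg (by have := hx i; omega) (by positivity))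

private lemma lvv_le {x : V d} (hx : x ∈ Dset d n) : lvv d n x ≤ (d:ℤ) * ((n:ℤ)+2) ^ d := by
  unfold lvv
  calc ∑ i : Fin d, x i * ((n:ℤ)+2) ^ (d - 1 - (i:ℕ))
      ≤ ∑ _i : Fin d, ((n:ℤ)+2) ^ d := by
        apply Finset.sum_le_sum
        intro i _
        have hxi := hx i
        have h1 : x i * ((n:ℤ)+2) ^ (d - 1 - (i:ℕ)) ≤ ((n:ℤ)+2) * ((n:ℤ)+2) ^ (d - 1 - (i:ℕ)) :=
          mul_le_mul_of_nonneg_right (by omega) (by positivity)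
        have h2 : ((n:ℤ)+2) * ((n:ℤ)+2) ^ (d - 1 - (i:ℕ)) = ((n:ℤ)+2) ^ (d - 1 - (i:ℕ) + 1) := by
          rw [pow_succ]; ring
        have h3 : ((n:ℤ)+2) ^ (d - 1 - (i:ℕ) + 1) ≤ ((n:ℤ)+2) ^ d := by
          apply pow_le_pow_right₀ (by omega)
          have := i.isLt
          omega
        omega
    _ = (d:ℤ) * ((n:ℤ)+2) ^ d := by
        rw [Finset.sum_const, Finset.card_univ, Fintype.card_fin, nsmul_eq_mul]

/-- the layer/lex measure used for the propagation induction -/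
private def muu (d n : ℕ) (t : ℤ) (p₀ : V d) (x : V d) : ℤ :=
  ((d:ℤ) * ((n:ℤ)+2) ^ d + 1) * sum1 x +
    (if sum1 x = t ∧ lvv d n p₀ ≤ lvv d n x then (d:ℤ) * ((n:ℤ)+2) ^ d - lvv d n x
     else lvv d n x)

private lemma nuu_bounds {t : ℤ} {p₀ x : V d} (hx : x ∈ Dset d n) :
    0 ≤ (if sum1 x = t ∧ lvv d n p₀ ≤ lvv d n x then (d:ℤ) * ((n:ℤ)+2) ^ d - lvv d n x
     else lvv d n x) ∧
    (if sum1 x = t ∧ lvv d n p₀ ≤ lvv d n x then (d:ℤ) * ((n:ℤ)+2) ^ d - lvv d n x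
     else lvv d n x) ≤ (d:ℤ) * ((n:ℤ)+2) ^ d := by
  have h1 := lvv_nonneg hx
  have h2 := lvv_le hx
  split_ifs <;> omega

private lemma muu_nonneg {t : ℤ} {p₀ x : V d} (hx : x ∈ Dset d n) :
    0 ≤ muu d n t p₀ x := by
  have h1 := (nuu_bounds (t := t) (p₀ := p₀) hx).1
  have hs : 0 ≤ sum1 x := Finset.sum_nonneg (fun i _ => by have := hx i; omega)
  have hB : (0:ℤ) ≤ (d:ℤ) * ((n:ℤ)+2) ^ d + 1 := by positivity
  unfold muu
  nlinarith

private lemma muu_lt_low {t : ℤ} {p₀ x q : V d} (hq : q ∈ Dset d n) (hx : x ∈ Dset d n)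
    (h : sum1 q < sum1 x) : muu d n t p₀ q < muu d n t p₀ x := by
  have h1 := nuu_bounds (t := t) (p₀ := p₀) hq
  have h2 := nuu_bounds (t := t) (p₀ := p₀) hx
  unfold muu
  have hq1 : sum1 q + 1 ≤ sum1 x := h
  nlinarith [mul_le_mul_of_nonneg_left hq1
    (by positivity : (0:ℤ) ≤ (d:ℤ) * ((n:ℤ)+2) ^ d + 1)]

private lemma muu_lt_asc {t : ℤ} {p₀ x q : V d}
    (hs : sum1 q = sum1 x) (hlv : lvv d n q < lvv d n x)
    (hx' : ¬(sum1 x = t ∧ lvv d n p₀ ≤ lvv d n x)) :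
    muu d n t p₀ q < muu d n t p₀ x := by
  unfold muu
  rw [hs, if_neg (fun hcon => hx' ⟨hcon.1, hcon.2.trans hlv.le⟩), if_neg hx']
  omega

private lemma muu_lt_desc {t : ℤ} {p₀ x q : V d}
    (hs : sum1 q = sum1 x) (hsx : sum1 x = t)
    (hp : lvv d n p₀ ≤ lvv d n x) (hlv : lvv d n x < lvv d n q) :
    muu d n t p₀ q < muu d n t p₀ x := by
  unfold muu
  rw [hs, if_pos ⟨hsx, (lt_of_le_of_lt hp hlv).le⟩, if_pos ⟨hsx, hp⟩]
  omega

end Stmt8Aux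

private lemma stmt8_main (d n : ℕ) (hd : 2 ≤ d) (hn : 1 ≤ n)
    (γ : V d → V d → ℝ) (hγ : GoodCond d n γ)
    (t : ℤ)
    (p₀ : V d) (hp₀ : p₀ ∈ L d n t)
    (u : V d → ℝ)
    (hharm : ∀ q ∈ LS d n (t - 1) \
        ({q | Adj d n p₀ q} ∩ (JS d n (t - 1) ∪ LS d n (t - 1))),
      lap d n γ u q = 0)
    (hdir : ∀ q ∈ JS d n (t - 1), u q = 0)
    (hneu : ∀ q ∈ JS d n (t - 1), cur d n γ u q = 0) :
    ∀ N : ℕ, ∀ x : V d, x ∈ Dset d n → sum1 x ≤ t → x ≠ p₀ →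
      (muu d n t p₀ x).toNat < N → u x = 0 := by
  have hp₀D : p₀ ∈ Dset d n := hp₀.1
  have hp₀s : sum1 p₀ = t := hp₀.2
  intro N
  induction N with
  | zero => intro x _ _ _ hx; omega
  | succ N ih =>
    intro x hx hsx hxp₀ hmux
    have IH0 : ∀ q, q ∈ Dset d n → sum1 q ≤ t → q ≠ p₀ →
        muu d n t p₀ q < muu d n t p₀ x → u q = 0 := by
      intro q hqD hqs hqp hmu
      have h0 := muu_nonneg (t := t) (p₀ := p₀) hqD
      exact ih q hqD hqs hqp (by omega)
    by_cases h1 : ∃ k, x k = 1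
    · -- Neumann anchor case: some coordinate equals 1
      obtain ⟨k, hk1⟩ := h1
      set y := x + sing k (-1) with hy
      have hyx : x = y + sing k 1 := (add_single_neg_cancel x k).symm
      have hyk : y k = 0 := by rw [hy, addsing_apply, if_pos rfl]; omega
      have hynD : y ∉ Dset d n := fun hc => by have h := (hc k).1; omega
      have hyB : y ∈ Bset d n := ⟨hynD, x, hx, by rw [hyx, dist1_add_single]; norm_num⟩
      have hys : sum1 y = sum1 x - 1 := by rw [hy, sum1_add_single]; ring
      have hyJS : y ∈ JS d n (t-1) := Set.mem_union_left _ ⟨hyB, by omega, k, hyk⟩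
      have hadj : Adj d n y x :=
        ⟨by rw [hyx, dist1_add_single]; norm_num, Set.mem_union_right _ hyB,
          Set.mem_union_left _ hx, Or.inr hx⟩
      have hxnbrD : x ∈ nbrD d n y :=
        Finset.mem_filter.mpr ⟨mem_nbr_of (Dset_mem_box hx) hadj, hx⟩
      have huy : u y = 0 := hdir y hyJS
      have hsum : cur d n γ u y = γ y x * (u x - u y) := by
        unfold cur
        apply Finset.sum_eq_single_of_mem x hxnbrD
        intro q hq hqx
        exfalso
        have hqmem := Finset.mem_filter.mp hq
        obtain ⟨k', c, hc, hqe⟩ := mem_nbr_cases hqmem.1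
        have hqD := hqmem.2
        have hqk := (hqD k).1
        rcases hc with rfl | rfl
        · by_cases hkk : k' = k
          · exact hqx (by rw [hqe, hkk, ← hyx])
          · rw [hqe, addsing_apply, if_neg (fun hh : k = k' => hkk hh.symm)] at hqk
            omega
        · by_cases hkk : k' = k
          · rw [hqe, hkk, addsing_apply, if_pos rfl] at hqk
            omega
          · rw [hqe, addsing_apply, if_neg (fun hh : k = k' => hkk hh.symm)] at hqk
            omega
      have hcur := hneu y hyJS
      rw [hcur, huy, sub_zero] at hsum
      have hpos : 0 < γ y x := hγ.2 y x hadj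
      rcases mul_eq_zero.mp hsum.symm with hh | hh
      · exact absurd hh (ne_of_gt hpos)
      · exact hh
    · -- interior propagation case: all coordinates at least 2
      push_neg at h1
      have h2 : ∀ k, 2 ≤ x k := by
        intro k
        have ha := (hx k).1
        have hb := h1 k
        omega
      have solve : ∀ j : Fin d,
          (∀ i : Fin d, x + sing j (-1) ≠ p₀ + sing i (-1)) →
          (∀ k, k ≠ j → x + sing j (-1) + sing k 1 ∈ Dset d n →
            u (x + sing j (-1) + sing k 1) = 0) →
          u x = 0 := by
        intro j hnex hnbrs
        set y := x + sing j (-1) with hy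
        have hyx : x = y + sing j 1 := (add_single_neg_cancel x j).symm
        have hyD : y ∈ Dset d n := by
          intro i
          rw [hy, addsing_apply]
          have ha := hx i
          have hb := h2 i
          split_ifs <;> omega
        have hys : sum1 y = sum1 x - 1 := by rw [hy, sum1_add_single]; ring
        have hynadj : ¬ Adj d n p₀ y := by
          intro ha
          obtain ⟨k, c, hc, hqe⟩ := dist1_one_cases ha.1
          rcases hc with rfl | rfl
          · have hss := sum1_add_single p₀ k 1
            rw [← hqe] at hss
            omega
          · exact hnex k hqe
        have hyLS : y ∈ LS d n (t-1) := ⟨hyD, by omega⟩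
        have hlap : lap d n γ u y = 0 :=
          hharm y ⟨hyLS, fun hmem => hynadj hmem.1⟩
        have hyp₀ : y ≠ p₀ := by
          intro hh
          rw [hh] at hys
          omega
        have huy : u y = 0 := IH0 y hyD (by omega) hyp₀ (muu_lt_low hyD hx (by omega))
        have hadj : Adj d n y x :=
          ⟨by rw [hyx, dist1_add_single]; norm_num, Set.mem_union_left _ hyD,
            Set.mem_union_left _ hx, Or.inl hyD⟩
        have hxnbr : x ∈ nbr d n y := mem_nbr_of (Dset_mem_box hx) hadj
        apply key_step hγ hxnbr hlap huy
        intro q hq hqx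
        have hqbox := mem_box_iff'.mp (Finset.mem_filter.mp hq).1
        obtain ⟨k, c, hc, hqe⟩ := mem_nbr_cases hq
        have hqk : q k = y k + c := by rw [hqe, addsing_apply, if_pos rfl]
        have hqi : ∀ i, i ≠ k → q i = y i := by
          intro i hik
          rw [hqe, addsing_apply, if_neg hik]; ring
        have hqs : sum1 q = sum1 y + c := by rw [hqe, sum1_add_single]
        have hqBadj : dist1 q y = 1 := by
          rw [dist1_comm', hqe, dist1_add_single]
          rcases hc with rfl | rfl <;> norm_num
        rcases hc with rfl | rfl
        · -- upward neighbour
          have hkj : k ≠ j := by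
            intro hh
            exact hqx (by rw [hqe, hh, ← hyx])
          by_cases hqD : q ∈ Dset d n
          · rw [hqe]
            exact hnbrs k hkj (by rw [← hqe]; exact hqD)
          · have hqkv : q k = (n:ℤ)+1 := by
              by_contra hne
              apply hqD
              intro i
              by_cases hik : i = k
              · subst hik
                have hb := hqbox i
                have hc1 := (hyD i).1
                omega
              · rw [hqi i hik]; exact hyD i
            have hqB : q ∈ Bset d n := ⟨hqD, y, hyD, hqBadj⟩
            apply hdir
            apply Set.mem_union_right
            exact ⟨hqB, by omega, k, hqkv⟩
        · -- downward neighbour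
          by_cases hqD : q ∈ Dset d n
          · apply IH0 q hqD (by omega)
            · intro hh; rw [hh] at hqs; omega
            · exact muu_lt_low hqD hx (by omega)
          · have hqkv : q k = 0 := by
              by_contra hne
              apply hqD
              intro i
              by_cases hik : i = k
              · subst hik
                have hb := hqbox i
                have hc2 := (hyD i).2
                omega
              · rw [hqi i hik]; exact hyD i
            have hqB : q ∈ Bset d n := ⟨hqD, y, hyD, hqBadj⟩
            apply hdir
            apply Set.mem_union_left
            exact ⟨hqB, by omega, k, hqkv⟩
      by_cases hreg : sum1 x = t ∧ lvv d n p₀ ≤ lvv d n x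
      · -- "descending" region: use the last coordinate
        set j : Fin d := ⟨d-1, by omega⟩ with hj
        have hjval : (j:ℕ) = d-1 := rfl
        apply solve j
        · intro i hyeq
          by_cases hij : i = j
          · apply hxp₀
            funext m
            have hcm := congrFun hyeq m
            rw [addsing_apply, addsing_apply, hij] at hcm
            split_ifs at hcm <;> omega
          · have hxeq : x = p₀ + sing i (-1) + sing j 1 := by
              funext m
              have hcm := congrFun hyeq m
              rw [addsing_apply, addsing_apply] at hcm
              rw [addsing_apply, addsing_apply]
              split_ifs at hcm ⊢ <;> omega
            have hlx : lvv d n x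
                = lvv d n p₀ - ((n:ℤ)+2) ^ (d-1-(i:ℕ)) + ((n:ℤ)+2) ^ (d-1-(j:ℕ)) := by
              rw [hxeq, lvv_add_single, lvv_add_single]; ring
            have hvi : (i:ℕ) < (j:ℕ) := by
              have hne : (i:ℕ) ≠ (j:ℕ) := fun hc => hij (Fin.ext hc)
              have hlt := i.isLt
              omega
            have hwi : ((n:ℤ)+2) ^ (d-1-(j:ℕ)) < ((n:ℤ)+2) ^ (d-1-(i:ℕ)) := w_lt hvi
            have hr2 := hreg.2
            omega
        · intro k hkj hqD
          have hsq : sum1 (x + sing j (-1) + sing k 1) = sum1 x := by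
            rw [sum1_add_single, sum1_add_single]; ring
          have hlq : lvv d n (x + sing j (-1) + sing k 1)
              = lvv d n x - ((n:ℤ)+2)^(d-1-(j:ℕ)) + ((n:ℤ)+2)^(d-1-(k:ℕ)) := by
            rw [lvv_add_single, lvv_add_single]; ring
          have hkv : (k:ℕ) < (j:ℕ) := by
            have hne : (k:ℕ) ≠ (j:ℕ) := fun hc => hkj (Fin.ext hc)
            have hlt := k.isLt
            omega
          have hwk : ((n:ℤ)+2)^(d-1-(j:ℕ)) < ((n:ℤ)+2)^(d-1-(k:ℕ)) := w_lt hkv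
          have hqp₀ : x + sing j (-1) + sing k 1 ≠ p₀ := by
            intro hh
            rw [hh] at hlq
            have hr2 := hreg.2
            omega
          exact IH0 _ hqD (by omega) hqp₀ (muu_lt_desc hsq hreg.1 hreg.2 (by omega))
      · -- "ascending" region: use the first coordinate
        set j : Fin d := ⟨0, by omega⟩ with hj
        have hjval : (j:ℕ) = 0 := rfl
        apply solve j
        · intro i hyeq
          by_cases hij : i = j
          · apply hxp₀
            funext m
            have hcm := congrFun hyeq m
            rw [addsing_apply, addsing_apply, hij] at hcm
            split_ifs at hcm <;> omega
          · have hxeq : x = p₀ + sing i (-1) + sing j 1 := by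
              funext m
              have hcm := congrFun hyeq m
              rw [addsing_apply, addsing_apply] at hcm
              rw [addsing_apply, addsing_apply]
              split_ifs at hcm ⊢ <;> omega
            have hsxt : sum1 x = t := by
              have hss : sum1 x = sum1 p₀ + (-1) + 1 := by
                rw [hxeq, sum1_add_single, sum1_add_single]
              omega
            have hlx : lvv d n x
                = lvv d n p₀ - ((n:ℤ)+2) ^ (d-1-(i:ℕ)) + ((n:ℤ)+2) ^ (d-1-(j:ℕ)) := by
              rw [hxeq, lvv_add_single, lvv_add_single]; ring
            have hvi : (j:ℕ) < (i:ℕ) := by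
              have hne : (i:ℕ) ≠ (j:ℕ) := fun hc => hij (Fin.ext hc)
              omega
            have hwi : ((n:ℤ)+2) ^ (d-1-(i:ℕ)) < ((n:ℤ)+2) ^ (d-1-(j:ℕ)) := w_lt hvi
            exact hreg ⟨hsxt, by omega⟩
        · intro k hkj hqD
          have hsq : sum1 (x + sing j (-1) + sing k 1) = sum1 x := by
            rw [sum1_add_single, sum1_add_single]; ring
          have hlq : lvv d n (x + sing j (-1) + sing k 1)
              = lvv d n x - ((n:ℤ)+2)^(d-1-(j:ℕ)) + ((n:ℤ)+2)^(d-1-(k:ℕ)) := by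
            rw [lvv_add_single, lvv_add_single]; ring
          have hkv : (j:ℕ) < (k:ℕ) := by
            have hne : (k:ℕ) ≠ (j:ℕ) := fun hc => hkj (Fin.ext hc)
            omega
          have hwk : ((n:ℤ)+2)^(d-1-(k:ℕ)) < ((n:ℤ)+2)^(d-1-(j:ℕ)) := w_lt hkv
          have hqp₀ : x + sing j (-1) + sing k 1 ≠ p₀ := by
            intro hh
            rw [hh] at hlq hsq
            exact hreg ⟨by omega, by omega⟩
          exact IH0 _ hqD (by omega) hqp₀ (muu_lt_asc hsq (by omega) hreg)

/-- uniqueness on the reduced subgraph obtained by deleting a node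
`p₀ ∈ L_t` and its edges into `M_{p₀} = N(p₀) ∩ (J_{t-1}^S ∪ L_{t-1}^S)`. -/
theorem stmt8 (d n : ℕ) (hd : 2 ≤ d) (hn : 1 ≤ n)
    (γ : V d → V d → ℝ) (hγ : GoodCond d n γ)
    (t : ℤ) (ht1 : (d : ℤ) ≤ t) (ht2 : t ≤ (d : ℤ) * n)
    (p₀ : V d) (hp₀ : p₀ ∈ L d n t)
    (u : V d → ℝ)
    (hsupp : ∀ q, q ∉ LS d n t \ {p₀} → u q = 0)
    (hharm : ∀ q ∈ LS d n (t - 1) \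
        ({q | Adj d n p₀ q} ∩ (JS d n (t - 1) ∪ LS d n (t - 1))),
      lap d n γ u q = 0)
    (hdir : ∀ q ∈ JS d n (t - 1), u q = 0)
    (hneu : ∀ q ∈ JS d n (t - 1), cur d n γ u q = 0) :
    ∀ q, u q = 0 := by
  intro q
  by_cases hq : q ∈ LS d n t \ {p₀}
  · obtain ⟨⟨hqD, hqs⟩, hqp⟩ := hq
    have hqp' : q ≠ p₀ := fun hc => hqp (by simp [hc])
    exact stmt8_main d n hd hn γ hγ t p₀ hp₀ u hharm hdir hneu
      ((muu d n t p₀ q).toNat + 1) q hqD hqs hqp' (by omega)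
  · exact hsupp q hq

end DiscreteCalderon
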